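/- Let n, k be positive integers with n ≥ 8k and let i ∈ {1,...,n} be such that k·(i/n)·((n−i)/n) < 1 and i > n/2. If H ~ Hyp(n,i,k), then P(H ≥ i·k/n) ≥ k/n. -/

import Mathlib

/-- The probability mass function of the hypergeometric distribution `Hyp(n,i,k)`. -/
noncomputable def hypPMF (n i k j : ℕ) : ℝ :=
  ((Nat.choose i j : ℝ) * (Nat.choose (n - i) (k - j) : ℝ)) / (Nat.choose n k : ℝ)

/-- `P(H ≥ t)` for `H ~ Hyp(n,i,k)`. -/
noncomputable def hypTail (n i k : ℕ) (t : ℝ) : ℝ :=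
  ∑ j ∈ Finset.range (k + 1), if t ≤ (j : ℝ) then hypPMF n i k j else 0

lemma bern_pow (x : ℝ) (hx1 : x ≤ 1) (k m : ℕ) (hm : 0 < m) (hmk : m ≤ k)
    (hb : 0 ≤ 1 - (k : ℝ)/m * x) :
    (1 - (k:ℝ)/m * x)^m ≤ (1-x)^k := by
  have hm' : (0:ℝ) < m := by exact_mod_cast hm
  have h1 : (1 - x)^k = ((1-x) ^ ((k:ℝ)/m)) ^ (m:ℕ) := by
    rw [← Real.rpow_natCast ((1-x) ^ ((k:ℝ)/m)) m, ← Real.rpow_mul (by linarith),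
      div_mul_cancel₀ _ (ne_of_gt hm'), Real.rpow_natCast]
  rw [h1]
  apply pow_le_pow_left₀ hb
  have hp : (1:ℝ) ≤ (k:ℝ)/m := (one_le_div hm').mpr (by exact_mod_cast hmk)
  have := one_add_mul_self_le_rpow_one_add (by linarith : (-1:ℝ) ≤ -x) hp
  have h2 : (1:ℝ) + (k:ℝ)/m * (-x) = 1 - (k:ℝ)/m * x := by ring
  have h3 : (1:ℝ) + (-x) = 1 - x := by ring
  rw [h2, h3] at this
  exact this

lemma cubic_num (s : ℝ) (h1 : 1 ≤ s) (h2 : s ≤ 3/2) : (1/8 : ℝ) ≤ (1+s^2)*(1-8*s/21)^3 := by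
  nlinarith [mul_nonneg (sub_nonneg.2 h1) (sub_nonneg.2 h2), sq_nonneg (s-1), sq_nonneg (s-3/2),
    mul_nonneg (mul_nonneg (sub_nonneg.2 h1) (sub_nonneg.2 h2)) (sub_nonneg.2 h1),
    mul_nonneg (mul_nonneg (sub_nonneg.2 h1) (sub_nonneg.2 h2)) (sub_nonneg.2 h2),
    mul_nonneg (mul_nonneg (sub_nonneg.2 h1) (sub_nonneg.2 h1)) (sub_nonneg.2 h2)]

lemma quartic_num (s : ℝ) (h1 : 1 ≤ s) (h2 : s ≤ 2) : (1/8 : ℝ) ≤ (1+s^2)*(1-2*s/7)^4 := by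
  nlinarith [sq_nonneg (s-2), sq_nonneg (s-1), mul_nonneg (sub_nonneg.2 h1) (sub_nonneg.2 h2),
    sq_nonneg s, sq_nonneg (s*s-2)]

lemma descFact_ge (n i k : ℕ) (x : ℝ) (hx0 : 0 ≤ x) (hx1 : x ≤ 1) (hk : k ≤ i) (hin : i ≤ n)
    (hstep : ∀ m : ℕ, m < k → ((n:ℝ) - i) ≤ x * ((n:ℝ) - m)) :
    (1 - x)^k * (n.descFactorial k : ℝ) ≤ (i.descFactorial k : ℝ) := by
  induction k with
  | zero => simp
  | succ j ih =>
    have hji : j ≤ i := by omega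
    have ih' := ih hji (fun m hm => hstep m (by omega))
    rw [Nat.descFactorial_succ, Nat.descFactorial_succ]
    push_cast [Nat.cast_sub (le_trans hji hin), Nat.cast_sub hji]
    have h1 : (1 - x) * ((n:ℝ) - j) ≤ (i:ℝ) - j := by
      have := hstep j (by omega)
      linarith
    have h2 : (0:ℝ) ≤ (1 - x)^j * (n.descFactorial j : ℝ) :=
      mul_nonneg (pow_nonneg (by linarith) j) (Nat.cast_nonneg _)
    have h3 : (0:ℝ) ≤ (i:ℝ) - j := by
      have : (j:ℝ) ≤ i := by exact_mod_cast hji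
      linarith
    calc (1-x)^(j+1) * (((n:ℝ) - j) * (n.descFactorial j : ℝ))
        = ((1-x) * ((n:ℝ)-j)) * ((1-x)^j * (n.descFactorial j : ℝ)) := by ring
      _ ≤ ((i:ℝ) - j) * (i.descFactorial j : ℝ) := mul_le_mul h1 ih' h2 h3

set_option maxHeartbeats 2000000 in
theorem hyp_tail_ge_of_var_small_i_gt (n k i : ℕ) (hn : 0 < n) (hk : 0 < k)
    (h8 : 8 * k ≤ n) (hi1 : 1 ≤ i) (hi2 : i ≤ n)
    (hvar : (k : ℝ) * ((i : ℝ) / n) * (((n : ℝ) - i) / n) < 1)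
    (hhalf : n < 2 * i) :
    (k : ℝ) / n ≤ hypTail n i k ((i * k : ℝ) / n) := by
  have hkn : k ≤ n := by omega
  have hki : k ≤ i := by omega
  have hN : (0:ℝ) < n := by exact_mod_cast hn
  have hK : (1:ℝ) ≤ k := by exact_mod_cast hk
  have hIN : (i:ℝ) ≤ n := by exact_mod_cast hi2
  have h8' : 8*(k:ℝ) ≤ n := by exact_mod_cast h8
  have hKI : (k:ℝ) ≤ i := by exact_mod_cast hki
  have hhalf' : (n:ℝ) + 1 ≤ 2*i := by exact_mod_cast hhalf
  obtain ⟨D, hDdef⟩ : ∃ D : ℝ, D = (n:ℝ) - i := ⟨_, rfl⟩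
  have hD0 : 0 ≤ D := by rw [hDdef]; linarith
  have h2D : 2*D ≤ (n:ℝ) - 1 := by rw [hDdef]; linarith
  have hvar' : (k:ℝ) * i * D < (n:ℝ)^2 := by
    rw [hDdef]
    have e : (k:ℝ)*i*((n:ℝ)-i) = ((k:ℝ) * ((i:ℝ)/n) * (((n:ℝ)-i)/n)) * (n:ℝ)^2 := by
      field_simp
    rw [e]
    calc ((k:ℝ) * ((i:ℝ)/n) * (((n:ℝ)-i)/n)) * (n:ℝ)^2 < 1 * (n:ℝ)^2 :=
          mul_lt_mul_of_pos_right hvar (pow_pos hN 2)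
      _ = (n:ℝ)^2 := one_mul _
  have hden : (0:ℝ) < (n:ℝ) - k + 1 := by linarith
  obtain ⟨x, hxdef⟩ : ∃ x : ℝ, x = D / ((n:ℝ) - k + 1) := ⟨_, rfl⟩
  have hx0 : 0 ≤ x := by rw [hxdef]; exact div_nonneg hD0 hden.le
  have hx1 : x ≤ 1 := by
    rw [hxdef, div_le_one hden]; linarith
  have hxD : x * ((n:ℝ) - k + 1) = D := by rw [hxdef]; exact div_mul_cancel₀ _ hden.ne'
  have hxk : (k:ℝ) * x ≤ (8/7) * ((k:ℝ)*D/n) := by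
    have h1 : (k:ℝ) * x = ((k:ℝ)*D)/((n:ℝ)-k+1) := by rw [hxdef]; ring
    have h2 : (8/7:ℝ) * ((k:ℝ)*D/n) = (8*((k:ℝ)*D))/(7*n) := by ring
    rw [h1, h2, div_le_div_iff₀ hden (by linarith)]
    linarith [mul_nonneg (mul_nonneg (by linarith : (0:ℝ) ≤ (k:ℝ)) hD0)
      (by linarith : (0:ℝ) ≤ (n:ℝ) - 8*k + 8)]
  -- choose positivity
  have hCn : (0:ℝ) < (n.choose k : ℝ) := by exact_mod_cast Nat.choose_pos hkn
  -- main choose bound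
  have hPk : (1-x)^k * (n.choose k : ℝ) ≤ (i.choose k : ℝ) := by
    have hdf := descFact_ge n i k x hx0 hx1 hki hi2 ?_
    · rw [Nat.descFactorial_eq_factorial_mul_choose, Nat.descFactorial_eq_factorial_mul_choose]
        at hdf
      push_cast at hdf
      have hfac : (0:ℝ) < ((Nat.factorial k) : ℝ) := by exact_mod_cast k.factorial_pos
      have h' : ((Nat.factorial k) : ℝ) * ((1-x)^k * (n.choose k : ℝ)) ≤ ((Nat.factorial k) : ℝ) * (i.choose k : ℝ) := by
        linarith [hdf]
      exact le_of_mul_le_mul_left h' hfac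
    · intro m hm
      have hm' : (m:ℝ) ≤ (k:ℝ) - 1 := by
        have : (m:ℝ) + 1 ≤ k := by exact_mod_cast hm
        linarith
      have h1 : x*((n:ℝ)-k+1) ≤ x * ((n:ℝ)-m) := by
        apply mul_le_mul_of_nonneg_left _ hx0
        linarith
      rw [hxD, hDdef] at h1
      exact h1
  have hPx : (1-x)^k ≤ (i.choose k : ℝ) / (n.choose k : ℝ) := by
    rw [le_div_iff₀ hCn]; exact hPk
  have hP0 : (0:ℝ) ≤ (1-x)^k := pow_nonneg (by linarith) k
  -- pmf values
  have hpmfk : hypPMF n i k k = (i.choose k : ℝ) / (n.choose k : ℝ) := by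
    simp [hypPMF]
  -- nonnegativity of summands
  have hterm : ∀ j ∈ Finset.range (k+1),
      (0:ℝ) ≤ if ((i * k : ℝ) / n) ≤ (j:ℝ) then hypPMF n i k j else 0 := by
    intro j _
    split
    · have : (0:ℝ) ≤ hypPMF n i k j := by
        unfold hypPMF; positivity
      exact this
    · exact le_refl _
  have hkle : ((i * k : ℝ) / n) ≤ (k:ℝ) := by
    rw [div_le_iff₀ hN]
    have h1 : (i:ℝ)*k ≤ (n:ℝ)*k := mul_le_mul_of_nonneg_right hIN (by linarith)
    linarith [h1]
  have htail_k : hypPMF n i k k ≤ hypTail n i k ((i * k : ℝ) / n) := by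
    have h := Finset.single_le_sum hterm (Finset.self_mem_range_succ k)
    rwa [if_pos hkle] at h
  by_cases hcase : k * (n - i) < n
  · -- Case 1: only the top term is needed
    have hKD : (k:ℝ) * D ≤ (n:ℝ) - 1 := by
      have h1 : (k * (n-i) : ℕ) ≤ n - 1 := by omega
      have h2 := (Nat.cast_le (α := ℝ)).mpr h1
      push_cast [Nat.cast_sub hi2, Nat.cast_sub hn] at h2
      rw [hDdef]; linarith
    have hfinal : (k:ℝ)/n ≤ (1-x)^k := by
      rcases Nat.lt_or_ge k 2 with hk1 | hk2
      · have hkeq : k = 1 := by omega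
        subst hkeq
        have hxn : x * ((n:ℝ) - 1 + 1) = D := by
          have := hxD; push_cast at this ⊢; linarith
        simp only [pow_one, Nat.cast_one]
        rw [div_le_iff₀ hN]
        linarith [hxn, h2D, hN]
      · have hK2 : (2:ℝ) ≤ k := by exact_mod_cast hk2
        have hkx : (k:ℝ) * x ≤ 8/7 := by
          have h1 : (k:ℝ)*D/n ≤ 1 := by rw [div_le_one hN]; linarith
          have h2 : (8:ℝ)/7 * ((k:ℝ)*D/n) ≤ 8/7 := by linarith
          linarith [hxk]
        have e2 : (k:ℝ)/2 * x = ((k:ℝ)*x)/2 := by ring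
        have h47 : (k:ℝ)/2 * x ≤ 4/7 := by rw [e2]; linarith [hkx]
        have hb : 0 ≤ 1 - (k:ℝ)/2 * x := by linarith [h47]
        have hbp := bern_pow x hx1 k 2 (by norm_num) hk2 hb
        have hy0 : 0 ≤ (k:ℝ)/2 * x := by positivity
        have h18 : (1:ℝ)/8 ≤ (1 - (k:ℝ)/2*x)^2 := by
          nlinarith [mul_nonneg (by linarith [h47] : (0:ℝ) ≤ 4/7 - (k:ℝ)/2*x)
            (by linarith [hy0] : (0:ℝ) ≤ 10/7 - (k:ℝ)/2*x)]
        have hkn8 : (k:ℝ)/n ≤ 1/8 := by rw [div_le_iff₀ hN]; linarith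
        linarith [hbp]
    calc (k:ℝ)/n ≤ (1-x)^k := hfinal
      _ ≤ hypPMF n i k k := by rw [hpmfk]; exact hPx
      _ ≤ _ := htail_k
  · -- Case 2: use the top two terms
    push_neg at hcase
    have hk3 : 3 ≤ k := by
      by_contra hlt
      push_neg at hlt
      have : k * (n - i) ≤ 2 * (n - i) := Nat.mul_le_mul_right _ (by omega)
      omega
    have hK3 : (3:ℝ) ≤ k := by exact_mod_cast hk3
    have hs1 : (n:ℝ) ≤ (k:ℝ) * D := by
      have h1 := (Nat.cast_le (α := ℝ)).mpr hcase
      push_cast [Nat.cast_sub hi2] at h1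
      rw [hDdef]; linarith
    obtain ⟨s, hsdef⟩ : ∃ s : ℝ, s = (k:ℝ)*D/n := ⟨_, rfl⟩
    have hs1' : 1 ≤ s := by rw [hsdef, le_div_iff₀ hN]; linarith
    have hkD0 : 0 ≤ (k:ℝ)*D := mul_nonneg (by linarith) hD0
    have hs2 : s ≤ 2 := by
      rw [hsdef, div_le_iff₀ hN]
      have h5 : (k:ℝ)*D*((n:ℝ)+1) ≤ (k:ℝ)*D*(2*i) := mul_le_mul_of_nonneg_left hhalf' hkD0
      have h6 : (k:ℝ)*D*n ≤ (2*n)*n := by nlinarith [h5, hvar', hkD0]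
      exact (mul_le_mul_iff_of_pos_right hN).mp h6
    have hsx : (k:ℝ)*x ≤ 8*s/7 := by
      rw [hsdef]; linarith [hxk]
    have hk1t : ((i * k : ℝ) / n) ≤ ((k:ℝ) - 1) := by
      rw [div_le_iff₀ hN]
      have e : (k:ℝ)*D = k*n - k*i := by rw [hDdef]; ring
      nlinarith [hs1, e, hN]
    have hsub : ({k-1, k} : Finset ℕ) ⊆ Finset.range (k+1) := by
      intro j hj
      simp only [Finset.mem_insert, Finset.mem_singleton] at hj
      rcases hj with h|h <;> simp only [Finset.mem_range] <;> omega
    have htail2 : hypPMF n i k (k-1) + hypPMF n i k k ≤ hypTail n i k ((i*k:ℝ)/n) := by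
      have h := Finset.sum_le_sum_of_subset_of_nonneg hsub (fun j hj _ => hterm j hj)
      rw [Finset.sum_pair (show k-1 ≠ k by omega)] at h
      have hc1 : ((i * k : ℝ) / n) ≤ ((k-1 : ℕ) : ℝ) := by
        push_cast [Nat.cast_sub (show 1 ≤ k by omega)]
        linarith [hk1t]
      rwa [if_pos hc1, if_pos hkle] at h
    have hIK : (0:ℝ) < (i:ℝ) - k + 1 := by linarith
    have hchoose : ((i.choose (k-1)):ℝ) * ((i:ℝ) - k + 1) = ((i.choose k):ℝ) * k := by
      have h := Nat.choose_succ_right_eq i (k-1)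
      rw [show k - 1 + 1 = k by omega] at h
      have h2 := congrArg (fun m : ℕ => (m:ℝ)) h
      push_cast [Nat.cast_sub (show k-1 ≤ i by omega),
        Nat.cast_sub (show 1 ≤ k by omega)] at h2
      linarith [h2]
    have hpmfk1 : hypPMF n i k (k-1) = ((i.choose (k-1)):ℝ) * D / ((n.choose k):ℝ) := by
      unfold hypPMF
      rw [show k - (k-1) = 1 by omega, Nat.choose_one_right]
      rw [hDdef]
      push_cast [Nat.cast_sub hi2]
      ring
    have hratio : s^2 ≤ (k:ℝ)*D/((i:ℝ)-k+1) := by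
      rw [hsdef, div_pow, div_le_div_iff₀ (by positivity) hIK]
      have hIK2 : (i:ℝ) - k + 1 ≤ i := by linarith
      nlinarith [mul_le_mul_of_nonneg_left hvar'.le hkD0,
        mul_le_mul_of_nonneg_left hIK2 (mul_nonneg hkD0 hkD0)]
    have hCC0 : (0:ℝ) ≤ ((i.choose k):ℝ)/((n.choose k):ℝ) := by positivity
    have hpk1_ge : (1-x)^k * s^2 ≤ hypPMF n i k (k-1) := by
      rw [hpmfk1]
      have e1 : ((i.choose (k-1)):ℝ) = ((i.choose k):ℝ) * k / ((i:ℝ)-k+1) := by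
        rw [eq_div_iff (ne_of_gt hIK)]
        linarith [hchoose]
      rw [e1]
      have e2 : ((i.choose k):ℝ) * k / ((i:ℝ)-k+1) * D / ((n.choose k):ℝ)
          = (((i.choose k):ℝ)/((n.choose k):ℝ)) * ((k:ℝ)*D/((i:ℝ)-k+1)) := by
        field_simp
      rw [e2]
      exact mul_le_mul hPx hratio (sq_nonneg s) hCC0
    have htot : (1-x)^k * (1 + s^2) ≤ hypPMF n i k (k-1) + hypPMF n i k k := by
      have h1 : (1-x)^k ≤ hypPMF n i k k := by rw [hpmfk]; exact hPx
      have e : (1-x)^k * (1 + s^2) = (1-x)^k * s^2 + (1-x)^k := by ring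
      rw [e]
      exact add_le_add hpk1_ge h1
    have hkn8 : (k:ℝ)/n ≤ 1/8 := by rw [div_le_iff₀ hN]; linarith
    rcases Nat.lt_or_ge k 4 with hklt | hk4
    · -- k = 3
      have hkeq : k = 3 := by omega
      have hs32 : s ≤ 3/2 := by
        rw [hsdef, div_le_iff₀ hN, hkeq]
        push_cast
        linarith [h2D, hN]
      have hx83 : x ≤ 8*s/21 := by
        rw [hkeq] at hsx; push_cast at hsx; linarith
      have hbase : (0:ℝ) ≤ 1 - 8*s/21 := by nlinarith [hs32]
      have hpow : (1 - 8*s/21)^3 ≤ (1-x)^3 :=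
        pow_le_pow_left₀ hbase (by linarith [hx83]) 3
      have hnum : (1:ℝ)/8 ≤ (1+s^2)*(1-8*s/21)^3 := cubic_num s hs1' hs32
      have hchain : (1+s^2) * (1 - 8*s/21)^3 ≤ (1+s^2) * (1-x)^k := by
        rw [hkeq]
        exact mul_le_mul_of_nonneg_left hpow (by positivity)
      calc (k:ℝ)/n ≤ 1/8 := hkn8
        _ ≤ (1+s^2)*(1-8*s/21)^3 := hnum
        _ ≤ (1+s^2)*(1-x)^k := hchain
        _ = (1-x)^k*(1+s^2) := by ring
        _ ≤ hypPMF n i k (k-1) + hypPMF n i k k := htot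
        _ ≤ _ := htail2
    · -- k ≥ 4
      have hK4 : (4:ℝ) ≤ k := by exact_mod_cast hk4
      have hb : 0 ≤ 1 - (k:ℝ)/4 * x := by
        have e : (k:ℝ)/4 * x = ((k:ℝ)*x)/4 := by ring
        rw [e]; linarith [hsx, hs2]
      have hbp := bern_pow x hx1 k 4 (by norm_num) hk4 hb
      have hbase : (0:ℝ) ≤ 1 - 2*s/7 := by linarith [hs2]
      have hle : 1 - 2*s/7 ≤ 1 - (k:ℝ)/4 * x := by
        have e : (k:ℝ)/4 * x = ((k:ℝ)*x)/4 := by ring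
        rw [e]; linarith [hsx]
      have hmon : (1 - 2*s/7)^4 ≤ (1 - (k:ℝ)/4*x)^4 := pow_le_pow_left₀ hbase hle 4
      have hnum : (1:ℝ)/8 ≤ (1+s^2)*(1-2*s/7)^4 := quartic_num s hs1' hs2
      have hchain : (1+s^2) * (1 - 2*s/7)^4 ≤ (1+s^2) * (1-x)^k :=
        mul_le_mul_of_nonneg_left (le_trans hmon hbp) (by positivity)
      calc (k:ℝ)/n ≤ 1/8 := hkn8
        _ ≤ (1+s^2)*(1-2*s/7)^4 := hnum
        _ ≤ (1+s^2)*(1-x)^k := hchain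
        _ = (1-x)^k*(1+s^2) := by ring
        _ ≤ hypPMF n i k (k-1) + hypPMF n i k k := htot
        _ ≤ _ := htail2
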